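/- For all integers m ≥ 1 and n ≥ 1, Σ_{k=1}^m ( binom(m,k) · (n/2)^{k/2} / Γ(k/2) ) < ( (n/2)^{m/2} / Γ(m/2) ) · ( 1 + √(m/n) )^m, where binom(m,k) is the binomial coefficient and Γ is the Gamma function. (Moreover this bound is asymptotically tight: for fixed m, the ratio of the left side to the right side tends to 1 as n → ∞.) -/

import Mathlib

open scoped BigOperators

open Real Filter

lemma gstep {x : ℝ} (hx : 0 < x) : Real.Gamma (x + 1/2) ≤ Real.sqrt x * Real.Gamma x := by
  have h := Real.Gamma_mul_add_mul_le_rpow_Gamma_mul_rpow_Gamma (s := x) (t := x+1)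
    (a := 1/2) (b := 1/2) hx (by linarith) one_half_pos one_half_pos (by norm_num)
  have hG : 0 < Real.Gamma x := Real.Gamma_pos_of_pos hx
  have e1 : (1/2) * x + (1/2) * (x+1) = x + 1/2 := by ring
  rw [e1, Real.Gamma_add_one hx.ne'] at h
  calc Real.Gamma (x + 1/2) ≤ Real.Gamma x ^ (1/2:ℝ) * (x * Real.Gamma x) ^ (1/2:ℝ) := h
    _ = Real.sqrt x * Real.Gamma x := by
        rw [Real.mul_rpow hx.le hG.le, ← Real.sqrt_eq_rpow, ← Real.sqrt_eq_rpow,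
          show √(Real.Gamma x) * (√x * √(Real.Gamma x)) = √x * (√(Real.Gamma x) * √(Real.Gamma x)) by ring,
          Real.mul_self_sqrt hG.le]

lemma gratio (m : ℕ) : ∀ j k : ℕ, 1 ≤ k → k + j ≤ m →
    Real.Gamma (((k:ℝ) + j)/2) ≤ Real.Gamma ((k:ℝ)/2) * ((m:ℝ)/2) ^ ((j:ℝ)/2) := by
  intro j
  induction j with
  | zero => intro k hk _; simp
  | succ j ih =>
    intro k hk hkm
    have hk' : (1:ℝ) ≤ k := by exact_mod_cast hk
    have hm2 : (0:ℝ) < (m:ℝ)/2 := by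
      have : (1:ℕ) ≤ m := le_trans hk (by omega)
      have : (1:ℝ) ≤ m := by exact_mod_cast this
      linarith
    have hx : (0:ℝ) < ((k:ℝ) + j)/2 := by positivity
    have h1 : Real.Gamma (((k:ℝ) + (j+1:ℕ))/2) ≤ √(((k:ℝ)+j)/2) * Real.Gamma (((k:ℝ)+j)/2) := by
      have := gstep hx
      have e : ((k:ℝ) + (j+1:ℕ))/2 = ((k:ℝ)+j)/2 + 1/2 := by push_cast; ring
      rw [e]; exact this
    have hle : ((k:ℝ)+j)/2 ≤ (m:ℝ)/2 := by
      have : (k:ℝ) + j ≤ m := by exact_mod_cast le_trans (by omega) hkm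
      linarith
    have h2 : √(((k:ℝ)+j)/2) ≤ √((m:ℝ)/2) := Real.sqrt_le_sqrt hle
    have hGpos : 0 < Real.Gamma (((k:ℝ)+j)/2) := Real.Gamma_pos_of_pos hx
    have h3 : Real.Gamma (((k:ℝ)+j)/2) ≤ Real.Gamma ((k:ℝ)/2) * ((m:ℝ)/2) ^ ((j:ℝ)/2) :=
      ih k hk (by omega)
    calc Real.Gamma (((k:ℝ) + (j+1:ℕ))/2)
        ≤ √(((k:ℝ)+j)/2) * Real.Gamma (((k:ℝ)+j)/2) := h1
      _ ≤ √((m:ℝ)/2) * (Real.Gamma ((k:ℝ)/2) * ((m:ℝ)/2) ^ ((j:ℝ)/2)) := by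
          apply mul_le_mul h2 h3 hGpos.le (Real.sqrt_nonneg _)
      _ = Real.Gamma ((k:ℝ)/2) * ((m:ℝ)/2) ^ (((j:ℕ)+1:ℝ)/2) := by
          rw [Real.sqrt_eq_rpow, show (((j:ℕ)+1:ℝ))/2 = (1/2:ℝ) + (j:ℝ)/2 by ring,
            Real.rpow_add hm2]
          ring
      _ = Real.Gamma ((k:ℝ)/2) * ((m:ℝ)/2) ^ (((j+1:ℕ):ℝ)/2) := by push_cast; ring_nf

noncomputable def Bt (m n k : ℕ) : ℝ :=
  (m.choose k : ℝ) * ((n:ℝ)/2) ^ ((k:ℝ)/2) * ((m:ℝ)/2) ^ (((m-k:ℕ):ℝ)/2) /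
    Real.Gamma ((m:ℝ)/2)

lemma key2 (m n : ℕ) (hm : 1 ≤ m) (hn : 1 ≤ n) {k : ℕ} (hkm : k ≤ m) :
    ((n:ℝ)/2) ^ ((m:ℝ)/2) * √((m:ℝ)/n) ^ (m - k : ℕ)
      = ((n:ℝ)/2) ^ ((k:ℝ)/2) * ((m:ℝ)/2) ^ (((m-k:ℕ):ℝ)/2) := by
  have hn0 : (0:ℝ) < n := by exact_mod_cast hn
  have hm0 : (0:ℝ) < m := by exact_mod_cast hm
  have hn2 : (0:ℝ) < (n:ℝ)/2 := by linarith
  have h1 : √((m:ℝ)/n) ^ (m - k : ℕ) = ((m:ℝ)/n) ^ ((((m-k:ℕ)):ℝ)/2) := by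
    rw [Real.sqrt_eq_rpow, ← Real.rpow_natCast (((m:ℝ)/n) ^ ((1:ℝ)/2)) (m-k),
      ← Real.rpow_mul (by positivity)]
    congr 1; ring
  have h2 : ((n:ℝ)/2) ^ ((m:ℝ)/2)
      = ((n:ℝ)/2) ^ ((k:ℝ)/2) * ((n:ℝ)/2) ^ ((((m-k:ℕ)):ℝ)/2) := by
    rw [← Real.rpow_add hn2]
    congr 1
    rw [Nat.cast_sub hkm]; ring
  have h3 : ((n:ℝ)/2) ^ ((((m-k:ℕ)):ℝ)/2) * ((m:ℝ)/n) ^ ((((m-k:ℕ)):ℝ)/2)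
      = ((m:ℝ)/2) ^ ((((m-k:ℕ)):ℝ)/2) := by
    rw [← Real.mul_rpow (by positivity) (by positivity)]
    congr 1
    field_simp
  rw [h1, h2, mul_assoc, h3]

lemma main_ineq (m : ℕ) (hm : 1 ≤ m) (n : ℕ) (hn : 1 ≤ n) :
    ∑ k ∈ Finset.Icc 1 m,
        (m.choose k : ℝ) * ((n : ℝ) / 2) ^ ((k : ℝ) / 2) / Real.Gamma ((k : ℝ) / 2)
      < ((n : ℝ) / 2) ^ ((m : ℝ) / 2) / Real.Gamma ((m : ℝ) / 2) *
          (1 + Real.sqrt ((m : ℝ) / n)) ^ m := by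
  have hn0 : (0:ℝ) < n := by exact_mod_cast hn
  have hm0 : (0:ℝ) < m := by exact_mod_cast hm
  have hn2 : (0:ℝ) < (n:ℝ)/2 := by linarith
  have hm2 : (0:ℝ) < (m:ℝ)/2 := by linarith
  have hGm : 0 < Real.Gamma ((m:ℝ)/2) := Real.Gamma_pos_of_pos hm2
  have hB : ∀ k, k ≤ m → 0 < Bt m n k := by
    intro k hk
    have : 0 < m.choose k := Nat.choose_pos hk
    have hc : (0:ℝ) < (m.choose k : ℝ) := by exact_mod_cast this
    unfold Bt
    positivity
  have step1 : ∑ k ∈ Finset.Icc 1 m,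
      (m.choose k : ℝ) * ((n : ℝ) / 2) ^ ((k : ℝ) / 2) / Real.Gamma ((k : ℝ) / 2)
      ≤ ∑ k ∈ Finset.Icc 1 m, Bt m n k := by
    apply Finset.sum_le_sum
    intro k hk
    obtain ⟨hk1, hk2⟩ := Finset.mem_Icc.mp hk
    have hk2' : (0:ℝ) < (k:ℝ)/2 := by
      have : (0:ℝ) < k := by exact_mod_cast hk1
      linarith
    have hGk : 0 < Real.Gamma ((k:ℝ)/2) := Real.Gamma_pos_of_pos hk2'
    have key : Real.Gamma ((m:ℝ)/2)
        ≤ Real.Gamma ((k:ℝ)/2) * ((m:ℝ)/2) ^ ((((m-k:ℕ)):ℝ)/2) := by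
      have h := gratio m (m - k) k hk1 (by omega)
      have e : ((k:ℝ) + ((m-k:ℕ):ℝ))/2 = (m:ℝ)/2 := by
        rw [Nat.cast_sub hk2]; ring
      rwa [e] at h
    have hc : (0:ℝ) ≤ (m.choose k : ℝ) := by positivity
    unfold Bt
    rw [div_le_div_iff₀ hGk hGm]
    calc (m.choose k : ℝ) * ((n:ℝ)/2) ^ ((k:ℝ)/2) * Real.Gamma ((m:ℝ)/2)
        ≤ (m.choose k : ℝ) * ((n:ℝ)/2) ^ ((k:ℝ)/2) *
            (Real.Gamma ((k:ℝ)/2) * ((m:ℝ)/2) ^ ((((m-k:ℕ)):ℝ)/2)) := by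
          apply mul_le_mul_of_nonneg_left key (by positivity)
      _ = (m.choose k : ℝ) * ((n:ℝ)/2) ^ ((k:ℝ)/2) * ((m:ℝ)/2) ^ ((((m-k:ℕ)):ℝ)/2) *
            Real.Gamma ((k:ℝ)/2) := by ring
  have step2 : ∑ k ∈ Finset.Icc 1 m, Bt m n k < ∑ k ∈ Finset.range (m+1), Bt m n k := by
    refine Finset.sum_lt_sum_of_subset (i := 0) ?_ (by simp) (by simp) (hB 0 (by omega))
      (fun j hj _ => (hB j (Nat.lt_succ_iff.mp (Finset.mem_range.mp hj))).le)
    intro x hx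
    simp only [Finset.mem_Icc] at hx
    simp only [Finset.mem_range]; omega
  have step3 : ((n : ℝ) / 2) ^ ((m : ℝ) / 2) / Real.Gamma ((m : ℝ) / 2) *
      (1 + Real.sqrt ((m : ℝ) / n)) ^ m = ∑ k ∈ Finset.range (m+1), Bt m n k := by
    rw [add_pow, Finset.mul_sum]
    refine Finset.sum_congr rfl fun k hk => ?_
    have hkm : k ≤ m := Nat.lt_succ_iff.mp (Finset.mem_range.mp hk)
    simp only [one_pow, one_mul]
    unfold Bt
    rw [show ((n:ℝ)/2) ^ ((m:ℝ)/2) / Real.Gamma ((m:ℝ)/2) * (√((m:ℝ)/n) ^ (m-k) * (m.choose k : ℝ))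
        = (m.choose k : ℝ) * (((n:ℝ)/2) ^ ((m:ℝ)/2) * √((m:ℝ)/n) ^ (m-k)) / Real.Gamma ((m:ℝ)/2) by ring,
      key2 m n hm hn hkm]
    ring
  rw [step3]
  exact lt_of_le_of_lt step1 step2

lemma main_lim (m : ℕ) (hm : 1 ≤ m) :
    Filter.Tendsto
      (fun n : ℕ =>
        (∑ k ∈ Finset.Icc 1 m,
            (m.choose k : ℝ) * ((n : ℝ) / 2) ^ ((k : ℝ) / 2) /
              Real.Gamma ((k : ℝ) / 2)) /
          (((n : ℝ) / 2) ^ ((m : ℝ) / 2) / Real.Gamma ((m : ℝ) / 2) *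
            (1 + Real.sqrt ((m : ℝ) / n)) ^ m))
      Filter.atTop (nhds 1) := by
  have hm0 : (0:ℝ) < m := by exact_mod_cast hm
  have hm2 : (0:ℝ) < (m:ℝ)/2 := by linarith
  have hGm : 0 < Real.Gamma ((m:ℝ)/2) := Real.Gamma_pos_of_pos hm2
  -- the simplified form
  set g : ℕ → ℝ := fun n =>
    (∑ k ∈ Finset.Icc 1 m,
      (m.choose k : ℝ) * Real.Gamma ((m:ℝ)/2) / Real.Gamma ((k:ℝ)/2) *
        ((n:ℝ)/2) ^ ((k:ℝ)/2 - (m:ℝ)/2)) *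
    ((1 + Real.sqrt ((m:ℝ)/n)) ^ m)⁻¹ with hg
  have heq : ∀ᶠ n : ℕ in atTop, (∑ k ∈ Finset.Icc 1 m,
            (m.choose k : ℝ) * ((n : ℝ) / 2) ^ ((k : ℝ) / 2) /
              Real.Gamma ((k : ℝ) / 2)) /
          (((n : ℝ) / 2) ^ ((m : ℝ) / 2) / Real.Gamma ((m : ℝ) / 2) *
            (1 + Real.sqrt ((m : ℝ) / n)) ^ m) = g n := by
    filter_upwards [eventually_ge_atTop 1] with n hn
    have hn0 : (0:ℝ) < n := by exact_mod_cast hn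
    have hn2 : (0:ℝ) < (n:ℝ)/2 := by linarith
    have hP : (0:ℝ) < (1 + Real.sqrt ((m:ℝ)/n)) ^ m := by positivity
    rw [hg]
    rw [div_mul_eq_div_div, div_eq_mul_inv _ ((1 + Real.sqrt ((m:ℝ)/n)) ^ m)]
    congr 1
    rw [div_div_eq_mul_div, Finset.sum_mul, Finset.sum_div]
    refine Finset.sum_congr rfl fun k hk => ?_
    obtain ⟨hk1, hk2⟩ := Finset.mem_Icc.mp hk
    have hk2' : (0:ℝ) < (k:ℝ)/2 := by
      have : (0:ℝ) < k := by exact_mod_cast hk1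
      linarith
    have hGk : 0 < Real.Gamma ((k:ℝ)/2) := Real.Gamma_pos_of_pos hk2'
    rw [Real.rpow_sub hn2]
    field_simp
  refine Tendsto.congr' (heq.mono fun n h => h.symm) ?_
  -- limit of the sum
  have hsum : Tendsto (fun n : ℕ => ∑ k ∈ Finset.Icc 1 m,
      (m.choose k : ℝ) * Real.Gamma ((m:ℝ)/2) / Real.Gamma ((k:ℝ)/2) *
        ((n:ℝ)/2) ^ ((k:ℝ)/2 - (m:ℝ)/2)) atTop
      (nhds (∑ k ∈ Finset.Icc 1 m, if k = m then (1:ℝ) else 0)) := by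
    apply tendsto_finset_sum
    intro k hk
    obtain ⟨hk1, hk2⟩ := Finset.mem_Icc.mp hk
    rcases eq_or_lt_of_le hk2 with hkm | hkm
    · subst hkm
      simp only [if_pos rfl, sub_self, Real.rpow_zero, mul_one, Nat.choose_self,
        Nat.cast_one, one_mul, div_self hGm.ne']
      exact tendsto_const_nhds
    · rw [if_neg (by omega)]
      have hc : (k:ℝ)/2 - (m:ℝ)/2 < 0 := by
        have : (k:ℝ) < m := by exact_mod_cast hkm
        linarith
      have hrp : Tendsto (fun n : ℕ => ((n:ℝ)/2) ^ ((k:ℝ)/2 - (m:ℝ)/2)) atTop (nhds 0) := by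
        have h := tendsto_rpow_neg_atTop (y := -((k:ℝ)/2 - (m:ℝ)/2)) (by linarith)
        simp only [neg_neg] at h
        have hcomp : Tendsto (fun n : ℕ => (n:ℝ)/2) atTop atTop :=
          (tendsto_natCast_atTop_atTop).atTop_div_const two_pos
        exact h.comp hcomp
      have := hrp.const_mul ((m.choose k : ℝ) * Real.Gamma ((m:ℝ)/2) / Real.Gamma ((k:ℝ)/2))
      simpa using this
  have hsumval : (∑ k ∈ Finset.Icc 1 m, if k = m then (1:ℝ) else 0) = 1 := by
    rw [Finset.sum_ite_eq' (Finset.Icc 1 m) m fun _ => (1:ℝ)]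
    simp [hm]
  rw [hsumval] at hsum
  -- limit of the inverse factor
  have hP : Tendsto (fun n : ℕ => ((1 + Real.sqrt ((m:ℝ)/n)) ^ m)) atTop (nhds 1) := by
    have h0 : Tendsto (fun n : ℕ => (m:ℝ)/n) atTop (nhds 0) :=
      tendsto_const_div_atTop_nhds_zero_nat (m:ℝ)
    have hs : Tendsto (fun n : ℕ => Real.sqrt ((m:ℝ)/n)) atTop (nhds 0) := by
      have := (Real.continuous_sqrt.tendsto 0).comp h0
      simpa only [Function.comp_def, Real.sqrt_zero] using this
    have h1 : Tendsto (fun n : ℕ => 1 + Real.sqrt ((m:ℝ)/n)) atTop (nhds 1) := by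
      have := tendsto_const_nhds (x := (1:ℝ)) (f := atTop (α := ℕ)) |>.add hs
      simpa using this
    have := h1.pow m
    simpa using this
  have hPinv : Tendsto (fun n : ℕ => ((1 + Real.sqrt ((m:ℝ)/n)) ^ m)⁻¹) atTop (nhds 1) := by
    have := hP.inv₀ one_ne_zero
    simpa using this
  rw [hg]
  have := hsum.mul hPinv
  simpa only [mul_one] using this

/-- For all `m, n ≥ 1`,
`∑_{k=1}^m binom(m,k)(n/2)^{k/2}/Γ(k/2) < ((n/2)^{m/2}/Γ(m/2))(1+√(m/n))^m`,
and for fixed `m` the ratio of the two sides tends to `1` as `n → ∞`. -/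
theorem stmt17 (m : ℕ) (hm : 1 ≤ m) :
    (∀ n : ℕ, 1 ≤ n →
      ∑ k ∈ Finset.Icc 1 m,
          (m.choose k : ℝ) * ((n : ℝ) / 2) ^ ((k : ℝ) / 2) / Real.Gamma ((k : ℝ) / 2)
        < ((n : ℝ) / 2) ^ ((m : ℝ) / 2) / Real.Gamma ((m : ℝ) / 2) *
            (1 + Real.sqrt ((m : ℝ) / n)) ^ m) ∧
    Filter.Tendsto
      (fun n : ℕ =>
        (∑ k ∈ Finset.Icc 1 m,
            (m.choose k : ℝ) * ((n : ℝ) / 2) ^ ((k : ℝ) / 2) /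
              Real.Gamma ((k : ℝ) / 2)) /
          (((n : ℝ) / 2) ^ ((m : ℝ) / 2) / Real.Gamma ((m : ℝ) / 2) *
            (1 + Real.sqrt ((m : ℝ) / n)) ^ m))
      Filter.atTop (nhds 1) := by
  exact ⟨fun n hn => main_ineq m hm n hn, main_lim m hm⟩
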